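/- The function g(t) = (t²+1)·((t+1)·√(t²+1) − 2√2·t) / ((t²+t+1)·(t−1)²) is strictly increasing on the interval (1, ∞). -/

import Mathlib

noncomputable def g (t : ℝ) : ℝ :=
  (t ^ 2 + 1) * ((t + 1) * Real.sqrt (t ^ 2 + 1) - 2 * Real.sqrt 2 * t) /
    ((t ^ 2 + t + 1) * (t - 1) ^ 2)

noncomputable def gder (t : ℝ) : ℝ :=
  (2 * Real.sqrt 2 * ((t ^ 2 - 1) * (t ^ 4 + 4 * t ^ 2 + 1)) -
      Real.sqrt (t ^ 2 + 1) * (2 * t ^ 5 + 3 * t ^ 4 + 5 * t ^ 3 - 5 * t ^ 2 - 3 * t - 2)) /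
    ((t ^ 2 + t + 1) * (t - 1) ^ 2) ^ 2

lemma g_hasDerivAt {t : ℝ} (ht : 1 < t) : HasDerivAt g (gder t) t := by
  have h0 : (0:ℝ) < t ^ 2 + 1 := by positivity
  set s : ℝ := Real.sqrt (t ^ 2 + 1) with hs_def
  have hs : s ^ 2 = t ^ 2 + 1 := Real.sq_sqrt h0.le
  have hspos : 0 < s := Real.sqrt_pos.2 h0
  set r : ℝ := Real.sqrt 2 with hr_def
  have hDpos : (0:ℝ) < (t ^ 2 + t + 1) * (t - 1) ^ 2 :=
    mul_pos (by nlinarith) (pow_pos (sub_pos.2 ht) 2)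
  have hDne : (t ^ 2 + t + 1) * (t - 1) ^ 2 ≠ 0 := hDpos.ne'
  have h1 : HasDerivAt (fun x : ℝ => x ^ 2 + 1) (2 * t) t := by
    simpa using (hasDerivAt_pow 2 t).add_const 1
  have hsq : HasDerivAt (fun x : ℝ => Real.sqrt (x ^ 2 + 1)) (2 * t / (2 * s)) t :=
    h1.sqrt h0.ne'
  have hlin : HasDerivAt (fun x : ℝ => x + 1) 1 t := (hasDerivAt_id t).add_const 1
  have hc : HasDerivAt (fun x : ℝ => 2 * Real.sqrt 2 * x) (2 * Real.sqrt 2) t := by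
    simpa using (hasDerivAt_id t).const_mul (2 * Real.sqrt 2)
  have hNum : HasDerivAt
      (fun x : ℝ => (x ^ 2 + 1) * ((x + 1) * Real.sqrt (x ^ 2 + 1) - 2 * Real.sqrt 2 * x))
      (2 * t * ((t + 1) * s - 2 * r * t) +
        (t ^ 2 + 1) * ((1 * s + (t + 1) * (2 * t / (2 * s))) - 2 * r)) t :=
    h1.mul ((hlin.mul hsq).sub hc)
  have hDen : HasDerivAt (fun x : ℝ => (x ^ 2 + x + 1) * (x - 1) ^ 2)
      ((2 * t + 1) * (t - 1) ^ 2 + (t ^ 2 + t + 1) * (2 * (t - 1) ^ 1 * 1)) t := by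
    have ha : HasDerivAt (fun x : ℝ => x ^ 2 + x + 1) (2 * t + 1) t := by
      simpa using ((hasDerivAt_pow 2 t).add (hasDerivAt_id t)).add_const 1
    have hb : HasDerivAt (fun x : ℝ => (x - 1) ^ 2) (2 * (t - 1) ^ 1 * 1) t :=
      ((hasDerivAt_id t).sub_const 1).pow 2
    exact ha.mul hb
  have hdiv := hNum.div hDen hDne
  have hkey : (t ^ 2 + 1) * (2 * t / (2 * s)) = t * s := by
    field_simp
    linear_combination (-1) * hs
  have hval : gder t =
      ((2 * t * ((t + 1) * s - 2 * r * t) +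
          (t ^ 2 + 1) * ((1 * s + (t + 1) * (2 * t / (2 * s))) - 2 * r)) *
          ((t ^ 2 + t + 1) * (t - 1) ^ 2) -
        (t ^ 2 + 1) * ((t + 1) * s - 2 * r * t) *
          ((2 * t + 1) * (t - 1) ^ 2 + (t ^ 2 + t + 1) * (2 * (t - 1) ^ 1 * 1))) /
        ((t ^ 2 + t + 1) * (t - 1) ^ 2) ^ 2 := by
    unfold gder
    rw [← hs_def, ← hr_def]
    congr 1
    linear_combination (-(t + 1) * ((t ^ 2 + t + 1) * (t - 1) ^ 2)) * hkey
  rw [hval]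
  exact hdiv

lemma gder_pos {t : ℝ} (ht : 1 < t) : 0 < gder t := by
  have h0 : (0:ℝ) < t ^ 2 + 1 := by positivity
  set s : ℝ := Real.sqrt (t ^ 2 + 1) with hs_def
  have hs : s ^ 2 = t ^ 2 + 1 := Real.sq_sqrt h0.le
  have hspos : 0 < s := Real.sqrt_pos.2 h0
  set r : ℝ := Real.sqrt 2 with hr_def
  have hr : r ^ 2 = 2 := Real.sq_sqrt (by norm_num)
  have hrpos : 0 < r := Real.sqrt_pos.2 (by norm_num)
  have hApos : (0:ℝ) < (t ^ 2 - 1) * (t ^ 4 + 4 * t ^ 2 + 1) :=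
    mul_pos (by nlinarith) (by positivity)
  have hQ1pos : (0:ℝ) < 2 * t ^ 5 + 3 * t ^ 4 + 5 * t ^ 3 - 5 * t ^ 2 - 3 * t - 2 := by
    have h := mul_pos (sub_pos.2 ht)
      (show (0:ℝ) < 2 * t ^ 4 + 5 * t ^ 3 + 10 * t ^ 2 + 5 * t + 2 by positivity)
    nlinarith [h]
  have hsq : (s * (2 * t ^ 5 + 3 * t ^ 4 + 5 * t ^ 3 - 5 * t ^ 2 - 3 * t - 2)) ^ 2 <
      (2 * r * ((t ^ 2 - 1) * (t ^ 4 + 4 * t ^ 2 + 1))) ^ 2 := by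
    have hid : (2 * r * ((t ^ 2 - 1) * (t ^ 4 + 4 * t ^ 2 + 1))) ^ 2 -
        (s * (2 * t ^ 5 + 3 * t ^ 4 + 5 * t ^ 3 - 5 * t ^ 2 - 3 * t - 2)) ^ 2 =
        (t - 1) ^ 6 * (4 * t ^ 6 + 12 * t ^ 5 + 27 * t ^ 4 + 40 * t ^ 3 + 27 * t ^ 2 +
          12 * t + 4) := by
      linear_combination (4 * ((t ^ 2 - 1) * (t ^ 4 + 4 * t ^ 2 + 1)) ^ 2) * hr -
        ((2 * t ^ 5 + 3 * t ^ 4 + 5 * t ^ 3 - 5 * t ^ 2 - 3 * t - 2) ^ 2) * hs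
    nlinarith [pow_pos (sub_pos.2 ht) 6,
      show (0:ℝ) < 4 * t ^ 6 + 12 * t ^ 5 + 27 * t ^ 4 + 40 * t ^ 3 + 27 * t ^ 2 + 12 * t + 4
        by positivity]
  have hlt : s * (2 * t ^ 5 + 3 * t ^ 4 + 5 * t ^ 3 - 5 * t ^ 2 - 3 * t - 2) <
      2 * r * ((t ^ 2 - 1) * (t ^ 4 + 4 * t ^ 2 + 1)) := by
    have h2 : 0 ≤ 2 * r * ((t ^ 2 - 1) * (t ^ 4 + 4 * t ^ 2 + 1)) := by positivity
    nlinarith [mul_pos (mul_pos hspos hQ1pos) (by positivity :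
      (0:ℝ) < 2 * r * ((t ^ 2 - 1) * (t ^ 4 + 4 * t ^ 2 + 1)))]
  unfold gder
  rw [← hs_def, ← hr_def]
  have hDpos : (0:ℝ) < (t ^ 2 + t + 1) * (t - 1) ^ 2 :=
    mul_pos (by nlinarith) (pow_pos (sub_pos.2 ht) 2)
  apply div_pos (by linarith) (by positivity)

theorem stmt_13 : StrictMonoOn g (Set.Ioi (1 : ℝ)) := by
  apply strictMonoOn_of_deriv_pos (convex_Ioi 1)
  · intro x hx
    exact ((g_hasDerivAt hx).continuousAt).continuousWithinAt
  · intro x hx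
    rw [interior_Ioi] at hx
    rw [(g_hasDerivAt hx).deriv]
    exact gder_pos hx
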